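/- Let T be a tree with threshold-k resolving set S and let v be a vertex with at least two leaf-paths. Then all but at most one leaf-path P_j from v satisfies |S ∩ (V(P_j) \ {v})| ≥ c̄(ℓ(P_j)), and the remaining leaf-path P* satisfies |S ∩ (V(P*) \ {v})| ≥ c̲(ℓ(P*)), where for ℓ = q(3k+2) + r, 0 ≤ r ≤ 3k+1, the upper complexity is c̄(ℓ) = 2q + [r ≥ 1] + [r ≥ 2k+2] and the lower complexity is c̲(ℓ) = 2q + [r ≥ k+1] + [r ≥ 2k+2]. -/

import Mathlib

open SimpleGraph Finset

variable {V : Type*}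

/-- Truncated graph distance `d_k(x,y) = min(d(x,y), k+1)`. -/
noncomputable def dk (G : SimpleGraph V) (k : ℕ) (x y : V) : ℕ := min (G.dist x y) (k + 1)

/-- `w` lies on a shortest path (in a tree: the unique path) between `x` and `y`. -/
def OnPath (G : SimpleGraph V) (x y w : V) : Prop :=
  G.dist x w + G.dist w y = G.dist x y

/-- `S` is a threshold-`k` resolving set for `G`. -/
def ThresholdResolving (G : SimpleGraph V) (k : ℕ) (S : Set V) : Prop :=
  (∀ x y : V, x ≠ y → ∃ s ∈ S, dk G k s x ≠ dk G k s y) ∧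
  (∀ x : V, ∃ s ∈ S, G.dist s x ≤ k)

/-- A sensor `s` directly measures `x`: `d(s,x) ≤ k` and no other sensor lies on the
path from `s` to `x`. -/
def DirectlyMeasures (G : SimpleGraph V) (k : ℕ) (S : Set V) (s x : V) : Prop :=
  G.dist s x ≤ k ∧ ∀ t ∈ S, t ≠ s → ¬ OnPath G s x t

/-- The threshold-`k` metric dimension of a finite graph. -/
noncomputable def Tmd (G : SimpleGraph V) [Fintype V] (k : ℕ) : ℕ :=
  sInf {m | ∃ S : Finset V, ThresholdResolving G k ↑S ∧ S.card = m}

/-- The path between the sensors `s₁ ≠ s₂` contains no other sensor. -/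
def SensorPath (G : SimpleGraph V) (S : Set V) (s₁ s₂ : V) : Prop :=
  s₁ ≠ s₂ ∧ s₁ ∈ S ∧ s₂ ∈ S ∧ ∀ t ∈ S, OnPath G s₁ s₂ t → t = s₁ ∨ t = s₂

/-- The edge `{a,b}` lies on the (tree-)path between `x` and `y`. -/
def EdgeOnPath (G : SimpleGraph V) (x y a b : V) : Prop :=
  G.Adj a b ∧ OnPath G x y a ∧ OnPath G x y b

/-- A leaf-path of length `ℓ` starting at `v`: an induced path `v = p 0, p 1, …, p ℓ`
with `deg v ≥ 3`, ending in a leaf, all internal vertices of degree 2. -/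
def IsLeafPath (G : SimpleGraph V) [Fintype V] [DecidableRel G.Adj]
    (v : V) (ℓ : ℕ) (p : Fin (ℓ + 1) → V) : Prop :=
  Function.Injective p ∧ p 0 = v ∧ 3 ≤ G.degree v ∧
  (∀ i : Fin ℓ, G.Adj (p i.castSucc) (p i.succ)) ∧
  G.degree (p (Fin.last ℓ)) = 1 ∧
  ∀ i : Fin (ℓ + 1), (i : ℕ) ≠ 0 → (i : ℕ) ≠ ℓ → G.degree (p i) = 2

/-- Upper complexity of a path of length `ℓ` (with `ℓ = q(3k+2)+r`). -/
def cbar (k ℓ : ℕ) : ℕ :=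
  2 * (ℓ / (3 * k + 2)) + (if 1 ≤ ℓ % (3 * k + 2) then 1 else 0) +
    (if 2 * k + 2 ≤ ℓ % (3 * k + 2) then 1 else 0)

/-- Lower complexity of a path of length `ℓ` (with `ℓ = q(3k+2)+r`). -/
def clow (k ℓ : ℕ) : ℕ :=
  2 * (ℓ / (3 * k + 2)) + (if k + 1 ≤ ℓ % (3 * k + 2) then 1 else 0) +
    (if 2 * k + 2 ≤ ℓ % (3 * k + 2) then 1 else 0)

/-- The type of a vertex `v` with respect to the sensor pair `(s, s')`. -/
noncomputable def typ (G : SimpleGraph V) (s s' v : V) : ℤ :=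
  ((G.dist v s : ℤ) - (G.dist v s' : ℤ) + (G.dist s s' : ℤ)) / 2

/-- The attraction of the pair of sensors `{s, s'}`. -/
def PairAttraction (G : SimpleGraph V) (k : ℕ) (S : Set V) (s s' : V) : Set V :=
  {x | x ∉ S ∧ DirectlyMeasures G k S s x ∧ DirectlyMeasures G k S s' x ∧
    (∀ t ∈ S, t ≠ s → t ≠ s' → ¬ DirectlyMeasures G k S t x) ∧
    ∀ y : V, y ≠ x → y ∉ S →
      (∀ t ∈ S, t ≠ s → t ≠ s' → ¬ DirectlyMeasures G k S t y) →
      dk G k s x ≠ dk G k s y ∨ dk G k s' x ≠ dk G k s' y}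

/-- The subset of sensors `S' ⊆ S` minimally resolves the vertex `x`. -/
def MinimallyResolves (G : SimpleGraph V) (k : ℕ) (S S' : Set V) (x : V) : Prop :=
  x ∉ S ∧ (∀ s ∈ S', G.dist s x ≤ k) ∧
  (∀ t ∈ S, t ∉ S' → ¬ DirectlyMeasures G k S t x) ∧
  (∀ y : V, y ≠ x → (∀ t ∈ S, t ∉ S' → ¬ DirectlyMeasures G k S t y) →
    ∃ s ∈ S', dk G k s x ≠ dk G k s y) ∧
  (∀ s ∈ S', DirectlyMeasures G k S s x)

namespace Stmt10Aux

def fns (k t : ℕ) : ℕ := (t/2) * (3*k+2) + (t%2) * (k+1)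
def fpl (k t : ℕ) : ℕ := fns k t + k
def fne (k t : ℕ) : ℕ := fns k t + (t%2) * k

lemma fns_zero (k : ℕ) : fns k 0 = 0 := by simp [fns]

lemma fns_two (k t : ℕ) : fns k (t+2) = fns k t + (3*k+2) := by
  have h1 : (t+2)/2 = t/2 + 1 := by omega
  have h2 : (t+2)%2 = t%2 := by omega
  simp [fns, h1, h2]; ring

lemma fns_succ_even (k t : ℕ) (h : t % 2 = 0) : fns k (t+1) = fns k t + (k+1) := by
  have h1 : (t+1)/2 = t/2 := by omega
  have h2 : (t+1)%2 = 1 := by omega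
  simp [fns, h1, h2, h]

lemma fns_succ_odd (k t : ℕ) (h : t % 2 = 1) : fns k (t+1) = fns k t + (2*k+1) := by
  have h1 : (t+1)/2 = t/2 + 1 := by omega
  have h2 : (t+1)%2 = 0 := by omega
  simp [fns, h1, h2, h]; ring

lemma fns_step (k t : ℕ) : fns k t + (k+1) ≤ fns k (t+1) := by
  rcases Nat.mod_two_eq_zero_or_one t with h | h
  · rw [fns_succ_even k t h]
  · rw [fns_succ_odd k t h]; omega

lemma fns_add (k s r : ℕ) : fns k s + r*(k+1) ≤ fns k (s+r) := by
  induction r with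
  | zero => simp
  | succ n ih =>
    have h1 := fns_step k (s+n)
    calc fns k s + (n+1)*(k+1) = fns k s + n*(k+1) + (k+1) := by ring
      _ ≤ fns k (s+n) + (k+1) := by omega
      _ ≤ fns k (s+n+1) := h1
      _ = fns k (s+(n+1)) := by ring_nf

lemma ineq_i (k s r : ℕ) (hr : 2 ≤ r) : fns k s + r*(k+1) + k ≤ fns k (s+r) := by
  obtain ⟨u, rfl⟩ : ∃ u, r = u + 2 := ⟨r - 2, by omega⟩
  have h1 := fns_two k s
  have h2 := fns_add k (s+2) u
  calc fns k s + (u+2)*(k+1) + k = (fns k s + (3*k+2)) + u*(k+1) := by ring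
    _ = fns k (s+2) + u*(k+1) := by rw [h1]
    _ ≤ fns k (s+2+u) := h2
    _ = fns k (s+(u+2)) := by ring_nf

lemma fns_odd3 (k s : ℕ) (h : s % 2 = 1) : fns k (s+3) = fns k s + (5*k+3) := by
  have h1 := fns_succ_odd k s h
  have h2 := fns_two k (s+1)
  rw [show s+1+2 = s+3 from by ring] at h2
  omega

lemma ineq_odd (k s r : ℕ) (hs : s % 2 = 1) (hr : 3 ≤ r) :
    fns k s + r*(k+1) + 2*k ≤ fns k (s+r) := by
  obtain ⟨u, rfl⟩ : ∃ u, r = u + 3 := ⟨r - 3, by omega⟩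
  have h1 := fns_odd3 k s hs
  have h2 := fns_add k (s+3) u
  calc fns k s + (u+3)*(k+1) + 2*k = (fns k s + (5*k+3)) + u*(k+1) := by ring
    _ = fns k (s+3) + u*(k+1) := by rw [h1]
    _ ≤ fns k (s+3+u) := h2
    _ = fns k (s+(u+3)) := by ring_nf

lemma ineq_ii (k s r : ℕ) (hr : 2 ≤ r) : fne k s + r*(k+1) + k ≤ fne k (s+r) := by
  unfold fne
  rcases Nat.mod_two_eq_zero_or_one s with hs | hs
  · have := ineq_i k s r hr
    rw [hs]; omega
  · rcases Nat.mod_two_eq_zero_or_one (s+r) with h | h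
    · -- r odd, r ≥ 3
      have hr3 : 3 ≤ r := by omega
      have := ineq_odd k s r hs hr3
      rw [hs, h]; omega
    · have := ineq_i k s r hr
      rw [hs, h]; omega

lemma ineq_iii (k s r : ℕ) (hr : 1 ≤ r) : fpl k s + r*(k+1) ≤ fne k (s+r) := by
  unfold fpl fne
  rcases Nat.mod_two_eq_zero_or_one (s+r) with h | h
  · -- target parity even: need fns s + k + r(k+1) ≤ fns (s+r)
    rw [h]
    rcases Nat.lt_or_ge r 2 with h2 | h2
    · -- r = 1, s odd
      obtain rfl : r = 1 := by omega
      have hs : s % 2 = 1 := by omega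
      have := fns_succ_odd k s hs
      omega
    · have := ineq_i k s r h2
      omega
  · rw [h]
    have := fns_add k s r
    omega

lemma ineq_iv (k s r : ℕ) (hr : 1 ≤ r) : fne k s + r*(k+1) ≤ fns k (s+r) := by
  unfold fne
  rcases Nat.mod_two_eq_zero_or_one s with hs | hs
  · rw [hs]; have := fns_add k s r; omega
  · rw [hs]
    rcases Nat.lt_or_ge r 2 with h2 | h2
    · obtain rfl : r = 1 := by omega
      have := fns_succ_odd k s hs
      omega
    · have := ineq_i k s r h2
      omega

lemma ineq_v (k s : ℕ) : fne k s + (2*k+1) ≤ fpl k (s+1) := by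
  unfold fne fpl
  rcases Nat.mod_two_eq_zero_or_one s with hs | hs
  · rw [hs]; have := fns_succ_even k s hs; omega
  · rw [hs]; have := fns_succ_odd k s hs; omega

lemma ineq_vi (k s : ℕ) : fns k s + (2*k+1) ≤ fne k (s+1) := by
  unfold fne
  rcases Nat.mod_two_eq_zero_or_one s with hs | hs
  · have h2 : (s+1)%2 = 1 := by omega
    rw [h2]; have := fns_succ_even k s hs; omega
  · have h2 : (s+1)%2 = 0 := by omega
    rw [h2]; have := fns_succ_odd k s hs; omega

lemma ineq_vii (k t : ℕ) : t*(k+1) ≤ fns k t := by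
  have := fns_add k 0 t
  simpa [fns_zero] using this

lemma ineq_viii (k t : ℕ) (ht : 1 ≤ t) : t*(k+1) + k ≤ fne k t := by
  unfold fne
  rcases Nat.mod_two_eq_zero_or_one t with h | h
  · rcases Nat.lt_or_ge t 2 with h2 | h2
    · omega
    · have := ineq_i k 0 t h2
      rw [fns_zero] at this
      simp at this
      rw [h]; omega
  · have := ineq_vii k t
    rw [h]; omega

lemma fne_le_fpl (k t : ℕ) : fne k t ≤ fpl k t := by
  unfold fne fpl
  have : t % 2 ≤ 1 := by omega
  have : (t%2)*k ≤ k := by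
    calc (t%2)*k ≤ 1*k := Nat.mul_le_mul_right k this
      _ = k := by ring
  omega

lemma fne_ge (k t : ℕ) (ht : 1 ≤ t) : 2*k+1 ≤ fne k t := by
  have h7 := ineq_vii k t
  rcases Nat.lt_or_ge t 2 with h2 | h2
  · obtain rfl : t = 1 := by omega
    simp [fne, fns]; omega
  · unfold fne
    have : 2*(k+1) ≤ t*(k+1) := Nat.mul_le_mul_right _ h2
    omega

lemma fns_ge (k t : ℕ) (ht : 1 ≤ t) : k+1 ≤ fns k t := by
  have h7 := ineq_vii k t
  have : 1*(k+1) ≤ t*(k+1) := Nat.mul_le_mul_right _ ht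
  omega

open Finset in
lemma countLemma (k : ℕ) : ∀ (n : ℕ) (J : Finset ℕ) (c : ℕ) (hne : J.Nonempty), J.card = n →
    (∀ d, c + 1 ≤ d → d + (k+1) ≤ J.max' hne → ∃ m ∈ J, d+1 ≤ m ∧ m ≤ d + k) →
    J.max' hne ≤ c + n * (k+1) := by
  intro n
  induction n using Nat.strong_induction_on with
  | _ n IH =>
    intro J c hne hcard hwin
    set M := J.max' hne with hM
    rcases Nat.lt_or_ge M (c + (k+1) + 1) with h | h
    · have hn : 1 ≤ n := by
        rw [← hcard]
        exact Finset.card_pos.mpr hne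
      have : 1*(k+1) ≤ n*(k+1) := Nat.mul_le_mul_right _ hn
      omega
    · obtain ⟨m₀, hm₀J, hm₀1, hm₀2⟩ := hwin (M - (k+1)) (by omega) (by omega)
      have hm₀M : m₀ < M := by omega
      classical
      set J' := J.filter (fun m => m < M) with hJ'
      have hm₀J' : m₀ ∈ J' := by
        rw [hJ']; simp [Finset.mem_filter]; exact ⟨hm₀J, hm₀M⟩
      have hne' : J'.Nonempty := ⟨m₀, hm₀J'⟩
      set M' := J'.max' hne' with hM'
      have hM'M : M' < M := by
        have hmem := J'.max'_mem hne'
        have h2 : M' ∈ Finset.filter (fun m => m < M) J := hmem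
        exact (Finset.mem_filter.mp h2).2
      have hm₀M' : m₀ ≤ M' := J'.le_max' m₀ hm₀J'
      have hcard' : J'.card < n := by
        rw [← hcard]
        apply Finset.card_lt_card
        constructor
        · rw [hJ']; exact Finset.filter_subset _ _
        · intro hsub
          have hMJ : M ∈ J := J.max'_mem hne
          have h2 := hsub hMJ
          rw [hJ'] at h2
          simp [Finset.mem_filter] at h2
      have hwin' : ∀ d, c + 1 ≤ d → d + (k+1) ≤ J'.max' hne' → ∃ m ∈ J', d+1 ≤ m ∧ m ≤ d + k := by
        intro d hd1 hd2
        obtain ⟨m, hmJ, hm1, hm2⟩ := hwin d hd1 (by omega)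
        refine ⟨m, ?_, hm1, hm2⟩
        rw [hJ']; simp [Finset.mem_filter]
        exact ⟨hmJ, by omega⟩
      have := IH J'.card hcard' J' c hne' rfl hwin'
      have hc' : J'.card ≤ n - 1 := by omega
      have : J'.card * (k+1) ≤ (n-1)*(k+1) := Nat.mul_le_mul_right _ hc'
      have hn1 : (n-1)*(k+1) + 1*(k+1) = n * (k+1) := by
        rw [← Nat.add_mul]
        congr 1
        omega
      omega

/-- The combinatorial kernel: lower bounds on the number of sensors on a leaf path. -/
lemma kernel (k : ℕ) (hk : 1 ≤ k) : ∀ (t : ℕ) (I : Finset ℕ) (ℓ : ℕ) (ext : ℕ → Prop),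
    I.card = t →
    (∀ i, ext i → i ≤ k) →
    (∀ m ∈ I, 1 ≤ m ∧ m ≤ ℓ) →
    (∀ i, 1 ≤ i → i ≤ ℓ → ext i ∨ ∃ m ∈ I, i ≤ m + k ∧ m ≤ i + k) →
    (∀ m ∈ I, 2 ≤ m → m + 1 ≤ ℓ → ¬ ext (m-1) →
      ∃ b ∈ I, b ≠ m ∧ ((m-1 ≤ b + k ∧ b ≤ m-1+k) ∨ (m+1 ≤ b + k ∧ b ≤ m+1+k))) →
    (ℓ ≤ fpl k t ∧
     (ℓ ∈ I → ℓ ≤ fne k t) ∧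
     ((∃ m ∈ I, m ≤ k+1) → ℓ ≤ fne k t) ∧
     ((∃ m ∈ I, m ≤ k+1) → ℓ ∈ I → ℓ ≤ fns k t)) := by
  intro t
  induction t using Nat.strong_induction_on with
  | _ t IH =>
    intro I ℓ ext hcard hext hIb hK1 hK2
    classical
    rcases Finset.eq_empty_or_nonempty I with rfl | hne
    · -- no sensors
      simp at hcard
      subst hcard
      have hl : ℓ ≤ k := by
        rcases Nat.eq_zero_or_pos ℓ with rfl | hp
        · omega
        · rcases hK1 ℓ hp le_rfl with h | ⟨m, hm, _⟩
          · exact hext ℓ h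
          · simp at hm
      refine ⟨by simp [fpl, fns]; omega, by simp, by simp, by simp⟩
    · set M := I.max' hne with hMdef
      have hMI : M ∈ I := I.max'_mem hne
      have hM1 : 1 ≤ M := (hIb M hMI).1
      have hMl : M ≤ ℓ := (hIb M hMI).2
      have hle : ∀ m ∈ I, m ≤ M := fun m hm => I.le_max' m hm
      have ht1 : 1 ≤ t := by rw [← hcard]; exact Finset.card_pos.mpr hne
      -- bound ℓ ≤ M + k (or ℓ small)
      have hlk : ℓ ≤ M + k := by
        rcases hK1 ℓ (by omega) le_rfl with h | ⟨m, hm, h1, h2⟩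
        · have := hext ℓ h; omega
        · have := hle m hm; omega
      -- the set of valid cuts
      set valid : ℕ → Prop := fun d => d + (k+1) ≤ M ∧ ∀ m ∈ I, m ≤ d ∨ d + (k+1) ≤ m with hvalid
      set D := (Finset.range M).filter valid with hD
      by_cases hDne : D.Nonempty
      · -- cut exists
        set c := D.max' hDne with hc
        have hcD : c ∈ D := D.max'_mem hDne
        have hcv : valid c := by
          rw [hD] at hcD; simp [Finset.mem_filter] at hcD; exact hcD.2
        obtain ⟨hcM, hcsplit⟩ := hcv
        have hwin : ∀ d, c + 1 ≤ d → d + (k+1) ≤ M → ∃ m ∈ I, d+1 ≤ m ∧ m ≤ d + k := by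
          intro d hd1 hd2
          have hdD : d ∉ D := by
            intro hdD
            have := D.le_max' d hdD
            omega
          rw [hD] at hdD
          simp [Finset.mem_filter, hvalid] at hdD
          obtain ⟨m, hm, h1, h2⟩ := hdD (by omega) hd2
          exact ⟨m, hm, by omega, by omega⟩
        set Ilow := I.filter (fun m => m ≤ c) with hIlow
        set Itop := I.filter (fun m => ¬ (m ≤ c)) with hItop
        have hsplitcard : Ilow.card + Itop.card = t := by
          rw [← hcard, hIlow, hItop]
          exact Finset.card_filter_add_card_filter_not _
        have hMtop : M ∈ Itop := by
          rw [hItop]; simp [Finset.mem_filter]; exact ⟨hMI, by omega⟩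
        have htopne : Itop.Nonempty := ⟨M, hMtop⟩
        set r := Itop.card with hr
        have hr1 : 1 ≤ r := Finset.card_pos.mpr htopne
        have htophigh : ∀ m ∈ Itop, c + (k+1) ≤ m := by
          intro m hm
          rw [hItop] at hm; simp [Finset.mem_filter] at hm
          rcases hcsplit m hm.1 with h | h
          · omega
          · exact h
        have htopmax : Itop.max' htopne = M := by
          apply le_antisymm
          · apply Finset.max'_le
            intro m hm
            rw [hItop] at hm; simp [Finset.mem_filter] at hm
            exact hle m hm.1
          · exact Itop.le_max' M hMtop
        -- count: M ≤ c + r * (k+1)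
        have hcount : M ≤ c + r * (k+1) := by
          have := countLemma k r Itop c htopne rfl ?_
          · rw [htopmax] at this; exact this
          · intro d hd1 hd2
            rw [htopmax] at hd2
            obtain ⟨m, hm, h1, h2⟩ := hwin d hd1 hd2
            refine ⟨m, ?_, h1, h2⟩
            rw [hItop]; simp [Finset.mem_filter]
            exact ⟨hm, by omega⟩
        -- truncated instance
        have hlowb : ∀ m ∈ Ilow, 1 ≤ m ∧ m ≤ c := by
          intro m hm
          rw [hIlow] at hm; simp [Finset.mem_filter] at hm
          exact ⟨(hIb m hm.1).1, hm.2⟩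
        have hlowK1 : ∀ i, 1 ≤ i → i ≤ c → ext i ∨ ∃ m ∈ Ilow, i ≤ m + k ∧ m ≤ i + k := by
          intro i h1 h2
          rcases hK1 i h1 (by omega) with h | ⟨m, hm, ha, hb⟩
          · exact Or.inl h
          · right
            refine ⟨m, ?_, ha, hb⟩
            rw [hIlow]; simp [Finset.mem_filter]
            refine ⟨hm, ?_⟩
            rcases hcsplit m hm with h | h
            · exact h
            · omega
        have hlowK2 : ∀ m ∈ Ilow, 2 ≤ m → m + 1 ≤ c → ¬ ext (m-1) →
            ∃ b ∈ Ilow, b ≠ m ∧ ((m-1 ≤ b + k ∧ b ≤ m-1+k) ∨ (m+1 ≤ b + k ∧ b ≤ m+1+k)) := by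
          intro m hm h2 h3 h4
          have hmI : m ∈ I := by rw [hIlow] at hm; exact (Finset.mem_filter.mp hm).1
          obtain ⟨b, hbI, hbm, hbnear⟩ := hK2 m hmI h2 (by omega) h4
          refine ⟨b, ?_, hbm, hbnear⟩
          rw [hIlow]; simp [Finset.mem_filter]
          refine ⟨hbI, ?_⟩
          rcases hcsplit b hbI with h | h
          · exact h
          · exfalso; rcases hbnear with ⟨h5, h6⟩ | ⟨h5, h6⟩ <;> omega
        have hlowcard : Ilow.card < t := by omega
        have IHlow := IH Ilow.card hlowcard Ilow c ext rfl hext hlowb hlowK1 hlowK2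
        obtain ⟨IH1, IH2, IH3, IH4⟩ := IHlow
        -- near sensor preserved (if c ≥ 1)
        have hnearlow : 1 ≤ c → (∃ m ∈ I, m ≤ k+1) → (∃ m ∈ Ilow, m ≤ k+1) := by
          rintro hc1 ⟨m, hm, hmk⟩
          refine ⟨m, ?_, hmk⟩
          rw [hIlow]; simp [Finset.mem_filter]
          refine ⟨hm, ?_⟩
          rcases hcsplit m hm with h | h
          · exact h
          · omega
        rcases Nat.eq_zero_or_pos c with hc0 | hc1
        · -- c = 0 : Ilow empty, dense bound
          have hIlowe : Ilow = ∅ := by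
            rw [hIlow]
            apply Finset.filter_eq_empty_iff.mpr
            intro m hm
            have := (hIb m hm).1
            omega
          have hrt : r = t := by
            rw [hIlowe] at hsplitcard; simp at hsplitcard; omega
          rw [hc0] at hcount
          simp at hcount
          rw [hrt] at hcount
          -- M ≤ t(k+1)
          have h7 := ineq_vii k t
          have h8 := ineq_viii k t ht1
          have hfne := fne_le_fpl k t
          refine ⟨by omega, ?_, by omega, ?_⟩
          · intro hlI
            have : ℓ ≤ M := hle ℓ hlI
            omega
          · intro _ hlI
            have : ℓ ≤ M := hle ℓ hlI
            omega
        · -- c ≥ 1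
          by_cases hend : ℓ ∈ I
          · -- case B : ℓ = M
            have hlM : ℓ = M := le_antisymm (hle ℓ hend) hMl
            have hs : Ilow.card + r = t := hsplitcard
            have hiii := ineq_iii k Ilow.card r hr1
            rw [hs] at hiii
            have h1 : ℓ ≤ fne k t := by omega
            refine ⟨le_trans h1 (fne_le_fpl k t), fun _ => h1, fun _ => h1, ?_⟩
            intro hnear _
            have hiv := ineq_iv k Ilow.card r hr1
            rw [hs] at hiv
            have := IH3 (hnearlow hc1 hnear)
            omega
          · -- extension case : M < ℓ
            have hMlt : M < ℓ := by
              rcases Nat.lt_or_ge M ℓ with h | h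
              · exact h
              · exfalso; apply hend; have : ℓ = M := by omega
                rw [this]; exact hMI
            by_cases hsmall : M ≤ k+1
            · -- ℓ ≤ 2k+1
              have hfge := fne_ge k t ht1
              have := fne_le_fpl k t
              refine ⟨by omega, fun h => absurd h hend, fun _ => by omega,
                fun _ h => absurd h hend⟩
            · -- M ≥ k+2 ≥ 2, and ¬ ext (M-1)
              have hnoext : ¬ ext (M-1) := by
                intro h
                have := hext _ h
                omega
              obtain ⟨b, hbI, hbM, hbnear⟩ := hK2 M hMI (by omega) (by omega) hnoext
              have hbleM : b ≤ M := hle b hbI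
              have hbltM : b < M := lt_of_le_of_ne hbleM hbM
              have hbk : M ≤ b + (k+1) := by
                rcases hbnear with ⟨h5, h6⟩ | ⟨h5, h6⟩ <;> omega
              rcases hcsplit b hbI with hblow | hbtop
              · -- b ≤ c forces b = c, M = c + k + 1, r = 1
                have hbc : b = c := by omega
                have hMc : M = c + (k+1) := by omega
                have hrone : r = 1 := by
                  have : Itop = {M} := by
                    apply Finset.eq_singleton_iff_unique_mem.mpr
                    refine ⟨hMtop, ?_⟩
                    intro m hm
                    have h1 := htophigh m hm
                    have h2 : m ∈ I := by rw [hItop] at hm; exact (Finset.mem_filter.mp hm).1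
                    have := hle m h2
                    omega
                  rw [hr, this]
                  simp
                have hcIlow : c ∈ Ilow := by
                  rw [hIlow, ← hbc]
                  exact Finset.mem_filter.mpr ⟨hbI, le_rfl⟩
                have hs : Ilow.card + 1 = t := by omega
                have hv := ineq_v k Ilow.card
                rw [hs] at hv
                have h2 := IH2 hcIlow
                refine ⟨by omega, fun h => absurd h hend, ?_, fun _ h => absurd h hend⟩
                intro hnear
                have hvi := ineq_vi k Ilow.card
                rw [hs] at hvi
                have := IH4 (hnearlow hc1 hnear) hcIlow
                omega
              · -- b in Itop : r ≥ 2
                have hbtopmem : b ∈ Itop := by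
                  rw [hItop]; simp [Finset.mem_filter]; exact ⟨hbI, by omega⟩
                have hr2 : 2 ≤ r := by
                  have : {b, M} ⊆ Itop := by
                    intro x hx
                    simp at hx
                    rcases hx with rfl | rfl
                    · exact hbtopmem
                    · exact hMtop
                  have := Finset.card_le_card this
                  rw [Finset.card_insert_of_notMem (by simp [hbM]), Finset.card_singleton] at this
                  omega
                have hs : Ilow.card + r = t := hsplitcard
                have hi := ineq_i k Ilow.card r hr2
                rw [hs] at hi
                refine ⟨?_, fun h => absurd h hend, ?_, fun _ h => absurd h hend⟩
                · unfold fpl at *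
                  omega
                · intro hnear
                  have hii := ineq_ii k Ilow.card r hr2
                  rw [hs] at hii
                  have := IH3 (hnearlow hc1 hnear)
                  unfold fne at *
                  omega
      · -- no valid cut : dense
        have hwin : ∀ d, d + (k+1) ≤ M → ∃ m ∈ I, d+1 ≤ m ∧ m ≤ d + k := by
          intro d hd
          have hdD : d ∉ D := by
            intro h
            exact hDne ⟨d, h⟩
          rw [hD] at hdD
          simp [Finset.mem_filter, hvalid] at hdD
          obtain ⟨m, hm, h1, h2⟩ := hdD (by omega) hd
          exact ⟨m, hm, by omega, by omega⟩
        have hcount : M ≤ t * (k+1) := by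
          have := countLemma k t I 0 hne hcard ?_
          · omega
          · intro d hd1 hd2
            exact hwin d hd2
        have h7 := ineq_vii k t
        have h8 := ineq_viii k t ht1
        have hfne := fne_le_fpl k t
        refine ⟨by omega, ?_, by omega, ?_⟩
        · intro hlI
          have : ℓ ≤ M := hle ℓ hlI
          omega
        · intro _ hlI
          have : ℓ ≤ M := hle ℓ hlI
          omega

section Graph

open SimpleGraph

variable {V : Type*}

lemma exists_pred {G : SimpleGraph V} (hconn : G.Connected) {x u : V} (h : x ≠ u) :
    ∃ w, G.Adj w u ∧ G.dist x u = G.dist x w + 1 := by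
  obtain ⟨p, hp⟩ := (hconn.preconnected x u).exists_walk_length_eq_dist
  cases hpr : p.reverse with
  | nil => exact absurd rfl h
  | cons h' q =>
    rename_i w
    have hlen : q.length + 1 = p.length := by
      have := congrArg SimpleGraph.Walk.length hpr
      rw [SimpleGraph.Walk.length_reverse, SimpleGraph.Walk.length_cons] at this
      omega
    have hdxw : G.dist x w ≤ q.length := by
      have := SimpleGraph.dist_le q.reverse
      rwa [SimpleGraph.Walk.length_reverse] at this
    have hwu : G.dist w u ≤ 1 := by
      have : G.dist w u = 1 := SimpleGraph.dist_eq_one_iff_adj.mpr h'.symm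
      omega
    have htri := hconn.dist_triangle (u := x) (v := w) (w := u)
    exact ⟨w, h'.symm, by omega⟩

variable [Fintype V] [DecidableEq V]

lemma leaf_unique_nbr {G : SimpleGraph V} [DecidableRel G.Adj] {u a : V}
    (hdeg : G.degree u = 1) (ha : G.Adj a u) : ∀ w, G.Adj w u → w = a := by
  intro w hw
  have h1 : w ∈ G.neighborFinset u := by
    rw [SimpleGraph.mem_neighborFinset]; exact hw.symm
  have h2 : a ∈ G.neighborFinset u := by
    rw [SimpleGraph.mem_neighborFinset]; exact ha.symm
  have hcard : (G.neighborFinset u).card ≤ 1 := by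
    rw [G.card_neighborFinset_eq_degree]; omega
  exact Finset.card_le_one.mp hcard w h1 a h2

lemma deg2_nbrs {G : SimpleGraph V} [DecidableRel G.Adj] {u a b : V}
    (hdeg : G.degree u = 2) (ha : G.Adj a u) (hb : G.Adj b u) (hab : a ≠ b) :
    ∀ w, G.Adj w u → w = a ∨ w = b := by
  intro w hw
  have hsub : ({a, b} : Finset V) ⊆ G.neighborFinset u := by
    intro x hx
    simp at hx
    rcases hx with rfl | rfl
    · rw [SimpleGraph.mem_neighborFinset]; exact ha.symm
    · rw [SimpleGraph.mem_neighborFinset]; exact hb.symm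
  have hcard2 : ({a, b} : Finset V).card = 2 := Finset.card_pair hab
  have heq : ({a, b} : Finset V) = G.neighborFinset u := by
    apply Finset.eq_of_subset_of_card_le hsub
    rw [G.card_neighborFinset_eq_degree, hdeg, hcard2]
  have : w ∈ ({a, b} : Finset V) := by
    rw [heq, SimpleGraph.mem_neighborFinset]; exact hw.symm
  simpa using this

/-- Lift `p : Fin (ℓ+1) → V` to `ℕ → V`. -/
def PP {ℓ : ℕ} (p : Fin (ℓ + 1) → V) (i : ℕ) : V := p ⟨min i ℓ, by omega⟩

lemma PP_eq {ℓ : ℕ} (p : Fin (ℓ + 1) → V) {i : ℕ} (h : i ≤ ℓ) :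
    PP p i = p ⟨i, by omega⟩ := by
  unfold PP
  congr 1
  exact Fin.ext (by simp [Nat.min_eq_left h])

variable {G : SimpleGraph V} [DecidableRel G.Adj] {v : V} {ℓ : ℕ} {p : Fin (ℓ + 1) → V}

lemma lp_P0 (hp : IsLeafPath G v ℓ p) : PP p 0 = v := by
  rw [PP_eq p (Nat.zero_le ℓ)]
  have := hp.2.1
  convert this using 2 <;> exact Fin.ext (by simp)

lemma lp_leaf (hp : IsLeafPath G v ℓ p) : G.degree (PP p ℓ) = 1 := by
  rw [PP_eq p le_rfl]
  have := hp.2.2.2.2.1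
  convert this using 2
  rfl

lemma lp_pos (hp : IsLeafPath G v ℓ p) : 1 ≤ ℓ := by
  by_contra h
  have hl0 : ℓ = 0 := by omega
  subst hl0
  have h1 := lp_leaf hp
  have h2 := hp.2.2.1
  rw [show PP p 0 = v from lp_P0 hp] at h1
  omega

lemma lp_inj (hp : IsLeafPath G v ℓ p) {i j : ℕ} (hi : i ≤ ℓ) (hj : j ≤ ℓ)
    (h : PP p i = PP p j) : i = j := by
  rw [PP_eq p hi, PP_eq p hj] at h
  have := hp.1 h
  have := congrArg Fin.val this
  simpa using this

lemma lp_adj (hp : IsLeafPath G v ℓ p) {i : ℕ} (hi : i < ℓ) :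
    G.Adj (PP p i) (PP p (i+1)) := by
  rw [PP_eq p (by omega), PP_eq p (by omega)]
  have := hp.2.2.2.1 ⟨i, hi⟩
  convert this using 2 <;> exact Fin.ext (by simp)

lemma lp_deg2 (hp : IsLeafPath G v ℓ p) {i : ℕ} (h1 : 1 ≤ i) (h2 : i < ℓ) :
    G.degree (PP p i) = 2 := by
  rw [PP_eq p (by omega)]
  exact hp.2.2.2.2.2 ⟨i, by omega⟩ (by simp; omega) (by simp; omega)

lemma lp_nbr (hp : IsLeafPath G v ℓ p) {i : ℕ} (w : V) (h1 : 1 ≤ i) (h2 : i ≤ ℓ)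
    (hw : G.Adj w (PP p i)) : w = PP p (i-1) ∨ (i < ℓ ∧ w = PP p (i+1)) := by
  rcases Nat.eq_or_lt_of_le h2 with rfl | hlt
  · left
    have hadj : G.Adj (PP p (i-1)) (PP p i) := by
      have := lp_adj hp (show i - 1 < i from by omega)
      rwa [show i-1+1 = i from by omega] at this
    exact leaf_unique_nbr (lp_leaf hp) hadj w hw
  · have hadja : G.Adj (PP p (i-1)) (PP p i) := by
      have := lp_adj hp (show i - 1 < ℓ from by omega)
      rwa [show i-1+1 = i from by omega] at this
    have hadjb : G.Adj (PP p (i+1)) (PP p i) := (lp_adj hp hlt).symm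
    have hab : PP p (i-1) ≠ PP p (i+1) := by
      intro h
      have := lp_inj hp (show i-1 ≤ ℓ from by omega) (show i+1 ≤ ℓ from by omega) h
      omega
    rcases deg2_nbrs (lp_deg2 hp h1 hlt) hadja hadjb hab w hw with h | h
    · exact Or.inl h
    · exact Or.inr ⟨hlt, h⟩

lemma lp_step (hconn : G.Connected) (hp : IsLeafPath G v ℓ p) :
    ∀ n i (x : V), 1 ≤ i → i ≤ ℓ → ℓ - i = n → (∀ j, i ≤ j → j ≤ ℓ → x ≠ PP p j) →
    G.dist x (PP p i) = G.dist x (PP p (i-1)) + 1 := by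
  intro n
  induction n using Nat.strong_induction_on with
  | _ n IHn =>
    intro i x h1 h2 hn hx
    have hxi : x ≠ PP p i := hx i le_rfl h2
    obtain ⟨w, hw, hdw⟩ := exists_pred hconn hxi
    rcases lp_nbr hp w h1 h2 hw with he | ⟨hlt, he⟩
    · rw [hdw, he]
    · have h3 : G.dist x (PP p (i+1)) = G.dist x (PP p (i+1-1)) + 1 :=
        IHn (ℓ - (i+1)) (by omega) (i+1) x (by omega) (by omega) rfl
          (fun j hj hj2 => hx j (by omega) hj2)
      rw [show i+1-1 = i from by omega] at h3
      rw [he] at hdw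
      omega

lemma lp_dist_off (hconn : G.Connected) (hp : IsLeafPath G v ℓ p) :
    ∀ i (x : V), i ≤ ℓ → (∀ j, 1 ≤ j → j ≤ ℓ → x ≠ PP p j) →
    G.dist x (PP p i) = G.dist x v + i := by
  intro i
  induction i with
  | zero =>
    intro x _ _
    rw [lp_P0 hp]
    omega
  | succ i IH =>
    intro x h hx
    have hstep := lp_step hconn hp (ℓ - (i+1)) (i+1) x (by omega) h rfl
      (fun j hj hj2 => hx j (by omega) hj2)
    rw [show i+1-1 = i from by omega] at hstep
    rw [hstep, IH x (by omega) hx]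
    omega

lemma lp_dist_on (hconn : G.Connected) (hp : IsLeafPath G v ℓ p) :
    ∀ d a, a + d ≤ ℓ → G.dist (PP p a) (PP p (a + d)) = d := by
  intro d
  induction d with
  | zero => intro a _; simp
  | succ d IH =>
    intro a h
    have hx : ∀ j, a + d + 1 ≤ j → j ≤ ℓ → PP p a ≠ PP p j := by
      intro j hj hj2 he
      have := lp_inj hp (show a ≤ ℓ from by omega) hj2 he
      omega
    have hstep := lp_step hconn hp (ℓ - (a+d+1)) (a+d+1) (PP p a) (by omega) (by omega) rfl hx
    rw [show a+d+1-1 = a+d from by omega] at hstep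
    rw [show a + (d+1) = a+d+1 from by omega, hstep, IH a (by omega)]

lemma lp_dist_v (hconn : G.Connected) (hp : IsLeafPath G v ℓ p) {i : ℕ} (h : i ≤ ℓ) :
    G.dist v (PP p i) = i := by
  have := lp_dist_on hconn hp i 0 (by omega)
  rw [lp_P0 hp] at this
  simpa using this

lemma lp_dist_on' (hconn : G.Connected) (hp : IsLeafPath G v ℓ p) {a b : ℕ}
    (ha : a ≤ ℓ) (hb : b ≤ ℓ) :
    G.dist (PP p a) (PP p b) = (b - a) + (a - b) := by
  rcases le_total a b with h | h
  · have := lp_dist_on hconn hp (b - a) a (by omega)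
    rw [show a + (b-a) = b from by omega] at this
    omega
  · have := lp_dist_on hconn hp (a - b) b (by omega)
    rw [show b + (a-b) = a from by omega] at this
    rw [SimpleGraph.dist_comm] at this
    omega

end Graph

section Graph2
open SimpleGraph
variable {V : Type*} [Fintype V] [DecidableEq V]
variable {G : SimpleGraph V} [DecidableRel G.Adj] {v : V} {ℓ : ℕ} {p : Fin (ℓ + 1) → V}

lemma lp_same (hconn : G.Connected) {ℓ' : ℕ} {p' : Fin (ℓ' + 1) → V}
    (hp : IsLeafPath G v ℓ p) (hp' : IsLeafPath G v ℓ' p')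
    (h1 : PP p 1 = PP p' 1) : Set.range p = Set.range p' := by
  have key : ∀ i, i ≤ ℓ → i ≤ ℓ' → PP p i = PP p' i := by
    intro i
    induction i using Nat.strong_induction_on with
    | _ i IHi =>
      intro hi hi'
      match i, hi, hi' with
      | 0, _, _ => rw [lp_P0 hp, lp_P0 hp']
      | 1, _, _ => exact h1
      | (j+2), hi, hi' =>
        have e1 : PP p (j+1) = PP p' (j+1) := IHi (j+1) (by omega) (by omega) (by omega)
        have e0 : PP p j = PP p' j := IHi j (by omega) (by omega) (by omega)
        have hadj : G.Adj (PP p' (j+2)) (PP p (j+1)) := by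
          rw [e1]
          exact (lp_adj hp' (show j+1 < ℓ' from by omega)).symm
        rcases lp_nbr hp (PP p' (j+2)) (by omega) (show j+1 ≤ ℓ from by omega) hadj with
          hw | ⟨hlt, hw⟩
        · exfalso
          rw [show j+1-1 = j from by omega, e0] at hw
          have := lp_inj hp' (by omega) (by omega) hw
          omega
        · rw [show j+1+1 = j+2 from by omega] at hw
          exact hw.symm
  have hll : ℓ = ℓ' := by
    by_contra hne
    rcases Nat.lt_or_ge ℓ ℓ' with h | h
    · have he := key ℓ le_rfl (by omega)
      have d1 := lp_leaf hp
      have d2 := lp_deg2 hp' (lp_pos hp) h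
      rw [he] at d1
      omega
    · have hlt : ℓ' < ℓ := by omega
      have he := key ℓ' (by omega) le_rfl
      have d1 := lp_leaf hp'
      have d2 := lp_deg2 hp (lp_pos hp') hlt
      rw [← he] at d1
      omega
  subst hll
  have hpp : p = p' := by
    funext i
    have hiv : i.val ≤ ℓ := Nat.lt_succ_iff.mp i.isLt
    have h1' : p i = PP p i.val := by
      rw [PP_eq p hiv]
    have h2' : p' i = PP p' i.val := by
      rw [PP_eq p' hiv]
    rw [h1', h2', key i.val hiv hiv]
  rw [hpp]

lemma lp_disjoint (hconn : G.Connected) {ℓ' : ℕ} {p' : Fin (ℓ' + 1) → V}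
    (hp : IsLeafPath G v ℓ p) (hp' : IsLeafPath G v ℓ' p')
    (hR : Set.range p ≠ Set.range p') {i m : ℕ}
    (h1 : 1 ≤ i) (h2 : i ≤ ℓ) (h3 : 1 ≤ m) (h4 : m ≤ ℓ') : PP p i ≠ PP p' m := by
  intro heq
  have him : i = m := by
    have d1 := lp_dist_v hconn hp h2
    have d2 := lp_dist_v hconn hp' h4
    rw [heq] at d1
    omega
  subst him
  have key : ∀ n, 1 ≤ n → n ≤ ℓ → n ≤ ℓ' → PP p n = PP p' n → PP p 1 = PP p' 1 := by
    intro n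
    induction n using Nat.strong_induction_on with
    | _ n IHn =>
      intro hn1 hn2 hn3 he
      rcases Nat.eq_or_lt_of_le hn1 with h | h
      · rw [← h] at he
        exact he
      · have hadj : G.Adj (PP p (n-1)) (PP p' n) := by
          rw [← he]
          have := lp_adj hp (show n-1 < ℓ from by omega)
          rwa [show n-1+1 = n from by omega] at this
        rcases lp_nbr hp' (PP p (n-1)) (by omega) hn3 hadj with hw | ⟨hlt, hw⟩
        · exact IHn (n-1) (by omega) (by omega) (by omega) (by omega) hw
        · exfalso
          have d1 := lp_dist_v hconn hp (show n-1 ≤ ℓ from by omega)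
          have d2 := lp_dist_v hconn hp' (show n+1 ≤ ℓ' from by omega)
          rw [hw] at d1
          omega
  exact hR (lp_same hconn hp hp' (key i h1 h2 h4 heq))

end Graph2

section Inversion

lemma gen_succ_le (d a b n : ℕ) (hd : 2 ≤ d) (ha : 1 ≤ a) (hb : 1 ≤ b) :
    2*(n/d) + (if a ≤ n%d then 1 else 0) + (if b ≤ n%d then 1 else 0) ≤
    2*((n+1)/d) + (if a ≤ (n+1)%d then 1 else 0) + (if b ≤ (n+1)%d then 1 else 0) := by
  have hd0 : 0 < d := by omega
  have hmod : n % d < d := Nat.mod_lt n hd0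
  have hdm := Nat.div_add_mod n d
  rcases Nat.lt_or_ge (n % d + 1) d with h | h
  · have h1 : (n+1)/d = n/d := by
      rw [show n + 1 = d*(n/d) + (n%d + 1) from by omega]
      rw [Nat.mul_add_div hd0]
      have : (n%d+1)/d = 0 := Nat.div_eq_of_lt h
      omega
    have h2 : (n+1)%d = n%d + 1 := by
      rw [show n + 1 = d*(n/d) + (n%d + 1) from by omega]
      rw [Nat.mul_add_mod]
      exact Nat.mod_eq_of_lt h
    rw [h1, h2]
    split_ifs <;> omega
  · have he : n % d + 1 = d := by omega
    have hq : n + 1 = d*(n/d + 1) := by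
      rw [show d*(n/d+1) = d*(n/d) + d from by ring]
      omega
    have h1 : (n+1)/d = n/d + 1 := by
      rw [hq, Nat.mul_div_cancel_left _ hd0]
    have h2 : (n+1)%d = 0 := by
      rw [hq]
      exact Nat.mul_mod_right d _
    rw [h1, h2]
    split_ifs <;> omega

lemma gen_mono (d a b : ℕ) (hd : 2 ≤ d) (ha : 1 ≤ a) (hb : 1 ≤ b) {x y : ℕ} (hxy : x ≤ y) :
    2*(x/d) + (if a ≤ x%d then 1 else 0) + (if b ≤ x%d then 1 else 0) ≤
    2*(y/d) + (if a ≤ y%d then 1 else 0) + (if b ≤ y%d then 1 else 0) := by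
  induction y with
  | zero =>
    have : x = 0 := by omega
    subst this
    exact le_rfl
  | succ y IH =>
    rcases Nat.lt_or_ge x (y+1) with h | h
    · exact le_trans (IH (by omega)) (gen_succ_le d a b y hd ha hb)
    · have : x = y + 1 := by omega
      subst this
      exact le_rfl

lemma clow_mono (k : ℕ) {x y : ℕ} (h : x ≤ y) : clow k x ≤ clow k y := by
  unfold clow
  exact gen_mono (3*k+2) (k+1) (2*k+2) (by omega) (by omega) (by omega) h

lemma cbar_mono (k : ℕ) {x y : ℕ} (h : x ≤ y) : cbar k x ≤ cbar k y := by
  unfold cbar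
  exact gen_mono (3*k+2) 1 (2*k+2) (by omega) (by omega) (by omega) h

lemma div_mod_eval (d q r : ℕ) (hd : 0 < d) (hr : r < d) :
    (q*d + r)/d = q ∧ (q*d + r)%d = r := by
  constructor
  · rw [show q*d + r = d*q + r from by ring, Nat.mul_add_div hd]
    have : r/d = 0 := Nat.div_eq_of_lt hr
    omega
  · rw [show q*d + r = d*q + r from by ring, Nat.mul_add_mod]
    exact Nat.mod_eq_of_lt hr

lemma clow_fpl (k t : ℕ) : clow k (fpl k t) ≤ t := by
  unfold clow fpl fns
  rcases Nat.mod_two_eq_zero_or_one t with h | h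
  · rw [h]
    have he := div_mod_eval (3*k+2) (t/2) k (by omega) (by omega)
    simp only [Nat.zero_mul, Nat.add_zero]
    rw [he.1, he.2]
    split_ifs <;> omega
  · rw [h]
    rw [show t/2 * (3*k+2) + 1*(k+1) + k = t/2 * (3*k+2) + (2*k+1) from by ring]
    have he := div_mod_eval (3*k+2) (t/2) (2*k+1) (by omega) (by omega)
    rw [he.1, he.2]
    split_ifs <;> omega

lemma cbar_fne (k t : ℕ) (hk : 1 ≤ k) : cbar k (fne k t) ≤ t := by
  unfold cbar fne fns
  rcases Nat.mod_two_eq_zero_or_one t with h | h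
  · rw [h]
    rw [show t/2 * (3*k+2) + 0*(k+1) + 0*k = t/2 * (3*k+2) + 0 from by ring]
    have he := div_mod_eval (3*k+2) (t/2) 0 (by omega) (by omega)
    rw [he.1, he.2]
    split_ifs <;> omega
  · rw [h]
    rw [show t/2 * (3*k+2) + 1*(k+1) + 1*k = t/2 * (3*k+2) + (2*k+1) from by ring]
    have he := div_mod_eval (3*k+2) (t/2) (2*k+1) (by omega) (by omega)
    rw [he.1, he.2]
    split_ifs <;> omega

end Inversion

end Stmt10Aux


open Stmt10Aux

/-- all but at most one leaf-path from `v` carries at least its upper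
complexity of sensors, and the remaining one carries at least its lower complexity. -/
theorem stmt10 (G : SimpleGraph V) [Fintype V] [DecidableEq V] [DecidableRel G.Adj]
    (hT : G.IsTree) (k : ℕ) (hk : 1 ≤ k) (S : Set V) (hS : ThresholdResolving G k S)
    (v : V) (L : ℕ) (hL : 2 ≤ L) (l : Fin L → ℕ)
    (p : (j : Fin L) → Fin (l j + 1) → V)
    (hp : ∀ j, IsLeafPath G v (l j) (p j))
    (hdist : ∀ j j', j ≠ j' → Set.range (p j) ≠ Set.range (p j')) :
    ∃ jstar : Fin L,
      (∀ j, j ≠ jstar → cbar k (l j) ≤ (S ∩ (Set.range (p j) \ {v})).ncard) ∧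
      clow k (l jstar) ≤ (S ∩ (Set.range (p jstar) \ {v})).ncard := by
  classical
  have hconn := hT.isConnected
  set ℙ : (j : Fin L) → ℕ → V := fun j => PP (p j) with hP
  set If : Fin L → Finset ℕ :=
    fun j => (Finset.Icc 1 (l j)).filter (fun m => ℙ j m ∈ S) with hIf
  have hIfmem : ∀ j m, m ∈ If j ↔ (1 ≤ m ∧ m ≤ l j ∧ ℙ j m ∈ S) := by
    intro j m
    rw [hIf]
    simp only [Finset.mem_filter, Finset.mem_Icc]
    tauto
  have habs : ∀ (j : Fin L) (a b : ℕ), a ≤ l j → b ≤ l j →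
      G.dist (ℙ j a) (ℙ j b) = (b - a) + (a - b) :=
    fun j a b ha hb => lp_dist_on' hconn (hp j) ha hb
  have hoff : ∀ (j : Fin L) (x : V) (i : ℕ), i ≤ l j →
      (∀ m, 1 ≤ m → m ≤ l j → x ≠ ℙ j m) →
      G.dist x (ℙ j i) = G.dist x v + i :=
    fun j x i hi hx => lp_dist_off hconn (hp j) i x hi hx
  have hext : ∀ (j : Fin L) (i : ℕ),
      (∃ s ∈ S, (∀ m, 1 ≤ m → m ≤ l j → s ≠ ℙ j m) ∧ G.dist v s + i ≤ k) → i ≤ k := by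
    intro j i hi
    obtain ⟨s, _, _, h⟩ := hi
    omega
  have hIb : ∀ (j : Fin L), ∀ m ∈ If j, 1 ≤ m ∧ m ≤ l j := by
    intro j m hm
    rw [hIfmem] at hm
    exact ⟨hm.1, hm.2.1⟩
  have hK1 : ∀ (j : Fin L) (i : ℕ), 1 ≤ i → i ≤ l j →
      (∃ s ∈ S, (∀ m, 1 ≤ m → m ≤ l j → s ≠ ℙ j m) ∧ G.dist v s + i ≤ k) ∨
      ∃ m ∈ If j, i ≤ m + k ∧ m ≤ i + k := by
    intro j i h1 h2
    obtain ⟨s, hsS, hsd⟩ := hS.2 (ℙ j i)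
    by_cases hb : ∃ m, 1 ≤ m ∧ m ≤ l j ∧ s = ℙ j m
    · obtain ⟨m, hm1, hm2, rfl⟩ := hb
      right
      have hd := habs j m i hm2 h2
      rw [hd] at hsd
      exact ⟨m, (hIfmem j m).mpr ⟨hm1, hm2, hsS⟩, by omega, by omega⟩
    · left
      push_neg at hb
      have hd := hoff j s i h2 hb
      rw [hd] at hsd
      refine ⟨s, hsS, hb, ?_⟩
      rw [SimpleGraph.dist_comm]
      omega
  have hK2 : ∀ (j : Fin L), ∀ m ∈ If j, 2 ≤ m → m + 1 ≤ l j →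
      ¬ (∃ s ∈ S, (∀ m' , 1 ≤ m' → m' ≤ l j → s ≠ ℙ j m') ∧ G.dist v s + (m-1) ≤ k) →
      ∃ b ∈ If j, b ≠ m ∧
        ((m-1 ≤ b + k ∧ b ≤ m-1+k) ∨ (m+1 ≤ b + k ∧ b ≤ m+1+k)) := by
    intro j m hm h2 h3 hnx
    have hxy : ℙ j (m-1) ≠ ℙ j (m+1) := by
      intro h
      have := lp_inj (hp j) (show m-1 ≤ l j from by omega) (show m+1 ≤ l j from by omega) h
      omega
    obtain ⟨s, hsS, hdk⟩ := hS.1 _ _ hxy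
    by_cases hb : ∃ b, 1 ≤ b ∧ b ≤ l j ∧ s = ℙ j b
    · obtain ⟨b, hb1, hb2, rfl⟩ := hb
      have d1 := habs j b (m-1) hb2 (by omega)
      have d2 := habs j b (m+1) hb2 (by omega)
      simp only [dk] at hdk
      rw [d1, d2] at hdk
      refine ⟨b, (hIfmem j b).mpr ⟨hb1, hb2, hsS⟩, by omega, by omega⟩
    · exfalso
      push_neg at hb
      have d1 := hoff j s (m-1) (by omega) hb
      have d2 := hoff j s (m+1) (by omega) hb
      simp only [dk] at hdk
      rw [d1, d2] at hdk
      apply hnx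
      refine ⟨s, hsS, hb, ?_⟩
      rw [SimpleGraph.dist_comm]
      omega
  have hNear : ∀ j j', j ≠ j' → (∃ m ∈ If j, m ≤ k+1) ∨ (∃ m ∈ If j', m ≤ k+1) := by
    intro j j' hjj
    have hRne := hdist j j' hjj
    have hxy : ℙ j 1 ≠ ℙ j' 1 :=
      lp_disjoint hconn (hp j) (hp j') hRne le_rfl (lp_pos (hp j)) le_rfl (lp_pos (hp j'))
    obtain ⟨s, hsS, hdk⟩ := hS.1 _ _ hxy
    by_cases hbj : ∃ b, 1 ≤ b ∧ b ≤ l j ∧ s = ℙ j b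
    · obtain ⟨b, hb1, hb2, rfl⟩ := hbj
      left
      have d1 := habs j b 1 hb2 (lp_pos (hp j))
      have hboff : ∀ m', 1 ≤ m' → m' ≤ l j' → ℙ j b ≠ ℙ j' m' :=
        fun m' hm1 hm2 => lp_disjoint hconn (hp j) (hp j') hRne hb1 hb2 hm1 hm2
      have d2 := hoff j' (ℙ j b) 1 (lp_pos (hp j')) hboff
      have dv : G.dist (ℙ j b) v = b := by
        rw [SimpleGraph.dist_comm]
        exact lp_dist_v hconn (hp j) hb2
      simp only [dk] at hdk
      rw [d1, d2, dv] at hdk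
      exact ⟨b, (hIfmem j b).mpr ⟨hb1, hb2, hsS⟩, by omega⟩
    · by_cases hbj' : ∃ b, 1 ≤ b ∧ b ≤ l j' ∧ s = ℙ j' b
      · obtain ⟨b, hb1, hb2, rfl⟩ := hbj'
        right
        have d1 := habs j' b 1 hb2 (lp_pos (hp j'))
        have hboff : ∀ m', 1 ≤ m' → m' ≤ l j → ℙ j' b ≠ ℙ j m' := by
          intro m' hm1 hm2 he
          exact lp_disjoint hconn (hp j) (hp j') hRne hm1 hm2 hb1 hb2 he.symm
        have d2 := hoff j (ℙ j' b) 1 (lp_pos (hp j)) hboff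
        have dv : G.dist (ℙ j' b) v = b := by
          rw [SimpleGraph.dist_comm]
          exact lp_dist_v hconn (hp j') hb2
        simp only [dk] at hdk
        rw [d1, d2, dv] at hdk
        exact ⟨b, (hIfmem j' b).mpr ⟨hb1, hb2, hsS⟩, by omega⟩
      · exfalso
        push_neg at hbj
        push_neg at hbj'
        have d1 := hoff j s 1 (lp_pos (hp j)) hbj
        have d2 := hoff j' s 1 (lp_pos (hp j')) hbj'
        simp only [dk] at hdk
        rw [d1, d2] at hdk
        exact hdk rfl
  have hker : ∀ j, l j ≤ fpl k (If j).card ∧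
      ((∃ m ∈ If j, m ≤ k+1) → l j ≤ fne k (If j).card) := by
    intro j
    have := kernel k hk (If j).card (If j) (l j)
      (fun i => ∃ s ∈ S, (∀ m, 1 ≤ m → m ≤ l j → s ≠ ℙ j m) ∧ G.dist v s + i ≤ k)
      rfl (hext j) (hIb j) (hK1 j) (hK2 j)
    exact ⟨this.1, this.2.2.1⟩
  have hncard : ∀ j, (S ∩ (Set.range (p j) \ {v})).ncard = (If j).card := by
    intro j
    have himg : S ∩ (Set.range (p j) \ {v}) = ↑((If j).image (ℙ j)) := by
      ext x
      simp only [Finset.coe_image, Set.mem_image, Finset.mem_coe]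
      constructor
      · rintro ⟨hxS, ⟨i, rfl⟩, hxv⟩
        have hiv : i.val ≤ l j := Nat.lt_succ_iff.mp i.isLt
        have hPi : ℙ j i.val = p j i := by
          show PP (p j) i.val = p j i
          rw [PP_eq (p j) hiv]
        have hi1 : 1 ≤ i.val := by
          rcases Nat.eq_zero_or_pos i.val with h0 | h
          · exfalso
            apply hxv
            show p j i = v
            rw [← hPi, h0]
            exact lp_P0 (hp j)
          · exact h
        exact ⟨i.val, (hIfmem j i.val).mpr ⟨hi1, hiv, by rw [hPi]; exact hxS⟩, hPi⟩
      · rintro ⟨m, hmIf, rfl⟩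
        rw [hIfmem] at hmIf
        obtain ⟨hm1, hm2, hmS⟩ := hmIf
        refine ⟨hmS, ⟨⟨m, by omega⟩, ?_⟩, ?_⟩
        · show p j ⟨m, by omega⟩ = PP (p j) m
          rw [PP_eq (p j) hm2]
        · intro hv
          have hveq : ℙ j m = ℙ j 0 := by
            show PP (p j) m = PP (p j) 0
            rw [lp_P0 (hp j)]
            exact hv
          have := lp_inj (hp j) hm2 (by omega) hveq
          omega
    rw [himg, Set.ncard_coe_finset]
    apply Finset.card_image_of_injOn
    intro a ha b hb hab
    exact lp_inj (hp j) ((hIb j a ha).2) ((hIb j b hb).2) hab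
  have hclow : ∀ j, clow k (l j) ≤ (If j).card :=
    fun j => le_trans (clow_mono k (hker j).1) (clow_fpl k _)
  have hcbar : ∀ j, (∃ m ∈ If j, m ≤ k+1) → cbar k (l j) ≤ (If j).card :=
    fun j hn => le_trans (cbar_mono k ((hker j).2 hn)) (cbar_fne k _ hk)
  by_cases hA : ∃ j0, ¬ (∃ m ∈ If j0, m ≤ k+1)
  · obtain ⟨j0, hj0⟩ := hA
    refine ⟨j0, ?_, ?_⟩
    · intro j hj
      rw [hncard j]
      apply hcbar j
      rcases hNear j j0 hj with h | h
      · exact h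
      · exact absurd h hj0
    · rw [hncard j0]
      exact hclow j0
  · push_neg at hA
    refine ⟨⟨0, by omega⟩, ?_, ?_⟩
    · intro j _
      rw [hncard j]
      exact hcbar j (hA j)
    · rw [hncard ⟨0, by omega⟩]
      exact hclow ⟨0, by omega⟩
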